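/- For the sequence s = (1, 0, 0, 0, ...), the Catalan-like numbers satisfy a_n(s) = binom(n, ⌊n/2⌋). -/
import Mathlib


/-- For the sequence `s = (1, 0, 0, 0, …)`, the Catalan-like numbers satisfy
`a n 0 = binom (n, ⌊n/2⌋)`. -/
theorem catalan_like_central_binomial (s : ℕ → ℝ)
    (hs0 : s 0 = 1) (hs : ∀ k : ℕ, 1 ≤ k → s k = 0)
    (a : ℕ → ℤ → ℝ)
    (h0 : ∀ k : ℤ, a 0 k = if k = 0 then 1 else 0)
    (hneg : ∀ (n : ℕ) (k : ℤ), k < 0 → a n k = 0)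
    (hrec : ∀ (n : ℕ) (k : ℤ), 0 ≤ k →
      a (n + 1) k = a n (k - 1) + s k.toNat * a n k + a n (k + 1)) :
    ∀ n : ℕ, a n 0 = (n.choose (n / 2) : ℝ) := by
  have key : ∀ n : ℕ, ∀ j : ℕ, a n (j : ℤ) = (n.choose ((n + j + 1) / 2) : ℝ) := by
    intro n
    induction n with
    | zero =>
      intro j
      rw [h0]
      rcases j with _ | j
      · simp
      · rw [if_neg (by omega : ((j+1:ℕ):ℤ) ≠ 0),
          Nat.choose_eq_zero_of_lt (by omega : (0:ℕ) < (0 + (j+1) + 1)/2), Nat.cast_zero]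
    | succ n ih =>
      intro j
      rw [hrec n j (by positivity)]
      rcases j with _ | m
      · -- j = 0
        simp only [Nat.cast_zero]
        have hneg1 : a n ((0:ℤ) - 1) = 0 := hneg n _ (by norm_num)
        have e1 : ((0:ℤ)).toNat = 0 := rfl
        rw [hneg1, e1, hs0]
        have h1 : a n (0:ℤ) = (n.choose ((n + 0 + 1) / 2) : ℝ) := ih 0
        have h2 : a n ((0:ℤ) + 1) = (n.choose ((n + 1 + 1) / 2) : ℝ) := by
          have := ih 1; simpa using this
        rw [h1, h2]
        have hsym : n.choose ((n + 0 + 1) / 2) = n.choose (n / 2) := by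
          rcases Nat.even_or_odd n with ⟨m, hm⟩ | ⟨m, hm⟩
          · subst hm; congr 1; omega
          · subst hm
            have e : (2 * m + 1 + 0 + 1) / 2 = m + 1 := by omega
            have e2 : (2 * m + 1) / 2 = m := by omega
            rw [e, e2, ← Nat.choose_symm (by omega : m + 1 ≤ 2 * m + 1)]
            congr 1; omega
        have epas : (n + 1).choose ((n + 1 + 0 + 1) / 2) =
            n.choose (n / 2) + n.choose ((n + 1 + 1) / 2) := by
          have e3 : (n + 1 + 0 + 1) / 2 = n / 2 + 1 := by omega
          have e4 : (n + 1 + 1) / 2 = n / 2 + 1 := by omega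
          simp only [e3, e4]; rw [Nat.choose_succ_succ]
        rw [epas, hsym]
        push_cast
        ring
      · -- j = m + 1 ≥ 1
        have e0 : ((m + 1 : ℕ) : ℤ).toNat = m + 1 := by simp
        rw [e0, hs (m + 1) (by omega), zero_mul]
        have e1 : ((m + 1 : ℕ) : ℤ) - 1 = (m : ℤ) := by push_cast; ring
        have e2 : ((m + 1 : ℕ) : ℤ) + 1 = ((m + 2 : ℕ) : ℤ) := by push_cast; ring
        rw [e1, e2, ih m, ih (m + 2)]
        have epas : (n + 1).choose ((n + 1 + (m + 1) + 1) / 2) =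
            n.choose ((n + m + 1) / 2) + n.choose ((n + (m + 2) + 1) / 2) := by
          have e3 : (n + 1 + (m + 1) + 1) / 2 = (n + m + 1) / 2 + 1 := by omega
          have e4 : (n + (m + 2) + 1) / 2 = (n + m + 1) / 2 + 1 := by omega
          simp only [e3, e4]; rw [Nat.choose_succ_succ]
        rw [epas]
        push_cast
        ring
  intro n
  have := key n 0
  rw [show ((0:ℕ):ℤ) = 0 by rfl] at this
  rw [this]
  rcases Nat.even_or_odd n with ⟨m, hm⟩ | ⟨m, hm⟩
  · subst hm; congr 2; omega
  · subst hm
    have e : (2 * m + 1 + 0 + 1) / 2 = m + 1 := by omega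
    have e2 : (2 * m + 1) / 2 = m := by omega
    rw [e, e2]
    norm_cast
    rw [← Nat.choose_symm (by omega : m + 1 ≤ 2 * m + 1)]
    congr 1; omega
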